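/- Let A : ℝ → ℝ be twice differentiable and let s ∈ ℝ. Set W(s) = (A(s) − s A'(s))² + 1 and define k₁(s) = (A''(s)s² + A'(s)W(s)s − A(s)W(s)) / W(s)^{3/2} and k₂(s) = (s A'(s) − A(s)) / √(W(s)). Then 3k₁(s) + 2k₂(s) = 0 if and only if 3s²A''(s) + 5s³A'(s)³ − 15s²A(s)A'(s)² + (15sA(s)² + 5s)A'(s) − 5A(s)³ − 5A(s) = 0. -/

import Mathlib

/-- The final Proposition of the paper: for the principal curvatures of the
hypersurface (4.10), the biconservativity condition `3k₁ + 2k₂ = 0` is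
equivalent to the stated second-order ODE for the profile function `A`. -/
theorem stmt_19 (A : ℝ → ℝ) (hA : Differentiable ℝ A)
    (hA' : Differentiable ℝ (deriv A)) (s : ℝ)
    (W k₁ k₂ : ℝ)
    (hW : W = (A s - s * deriv A s) ^ 2 + 1)
    (hk₁ : k₁ = (deriv (deriv A) s * s ^ 2 + deriv A s * W * s - A s * W)
      / W ^ ((3 : ℝ) / 2))
    (hk₂ : k₂ = (s * deriv A s - A s) / Real.sqrt W) :
    3 * k₁ + 2 * k₂ = 0 ↔
      3 * s ^ 2 * deriv (deriv A) s + 5 * s ^ 3 * (deriv A s) ^ 3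
        - 15 * s ^ 2 * A s * (deriv A s) ^ 2
        + (15 * s * (A s) ^ 2 + 5 * s) * deriv A s
        - 5 * (A s) ^ 3 - 5 * A s = 0 := by
  have hWpos : (0:ℝ) < W := by rw [hW]; positivity
  have hqpos : 0 < Real.sqrt W := Real.sqrt_pos.mpr hWpos
  have h32 : W ^ ((3:ℝ)/2) = W * Real.sqrt W := by
    rw [Real.sqrt_eq_rpow, show ((3:ℝ)/2) = 1 + 1/2 by norm_num,
      Real.rpow_add hWpos, Real.rpow_one]
  have hE : 3 * k₁ + 2 * k₂ =
      (3 * (deriv (deriv A) s * s ^ 2 + deriv A s * W * s - A s * W)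
        + 2 * (s * deriv A s - A s) * W) / (W * Real.sqrt W) := by
    rw [hk₁, hk₂, h32]
    field_simp
  have hnum : 3 * (deriv (deriv A) s * s ^ 2 + deriv A s * W * s - A s * W)
        + 2 * (s * deriv A s - A s) * W =
      3 * s ^ 2 * deriv (deriv A) s + 5 * s ^ 3 * (deriv A s) ^ 3
        - 15 * s ^ 2 * A s * (deriv A s) ^ 2
        + (15 * s * (A s) ^ 2 + 5 * s) * deriv A s
        - 5 * (A s) ^ 3 - 5 * A s := by
    rw [hW]; ring
  rw [hE, hnum, div_eq_zero_iff]
  simp [ne_of_gt hWpos, ne_of_gt hqpos, mul_eq_zero]
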